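/- For natural numbers n < q and integers c_q with ν₂(c_q) ≥ r − q + d(q), the 2-adic valuation of 2^{q−n} · n! · S(q,n) · c_q is at least r, where d is the binary digit sum and S(q,n) the Stirling number of the second kind. -/
import Mathlib


/-- Stirling numbers of the second kind. -/
def stirling : ℕ → ℕ → ℕ
  | 0, 0 => 1
  | 0, _ + 1 => 0
  | _ + 1, 0 => 0
  | n + 1, k + 1 => stirling n k + (k + 1) * stirling n (k + 1)

/-- Binary digit sum. -/
def binDigitSum (m : ℕ) : ℕ := (Nat.digits 2 m).sum

def Bsur (q n : ℕ) : ℕ := Nat.factorial n * stirling q n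

lemma Bsur_zero_succ (n : ℕ) : Bsur 0 (n+1) = 0 := by
  simp [Bsur, stirling]

lemma Bsur_succ_zero (q : ℕ) : Bsur (q+1) 0 = 0 := by
  simp [Bsur, stirling]

lemma Bsur_succ_succ (q n : ℕ) :
    Bsur (q+1) (n+1) = (n+1) * Bsur q n + (n+1) * Bsur q (n+1) := by
  simp only [Bsur, stirling, Nat.factorial_succ]
  ring

lemma sum_split (q n : ℕ) :
    ∑ k ∈ Finset.range (q+1), (q+1).choose k * Bsur k n
      = (∑ j ∈ Finset.range q, q.choose j * Bsur (j+1) n)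
        + ((∑ k ∈ Finset.range q, q.choose k * Bsur k n) + Bsur q n) := by
  rw [Finset.sum_range_succ' (fun k => (q+1).choose k * Bsur k n) q]
  have h1 : ∀ j, (q+1).choose (j+1) * Bsur (j+1) n
      = q.choose j * Bsur (j+1) n + q.choose (j+1) * Bsur (j+1) n := by
    intro j; rw [Nat.choose_succ_succ, add_mul]
  rw [Finset.sum_congr rfl (fun j _ => h1 j), Finset.sum_add_distrib]
  have h2 : (∑ j ∈ Finset.range q, q.choose (j+1) * Bsur (j+1) n) + (q+1).choose 0 * Bsur 0 n
      = (∑ k ∈ Finset.range q, q.choose k * Bsur k n) + Bsur q n := by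
    have h3 := (Finset.sum_range_succ' (fun k => q.choose k * Bsur k n) q).symm
    simp only [Nat.choose_zero_right, one_mul] at h3 ⊢
    rw [h3, Finset.sum_range_succ, Nat.choose_self, one_mul]
  omega

lemma Bsur_rec : ∀ n q : ℕ, Bsur q (n+1) = ∑ k ∈ Finset.range q, q.choose k * Bsur k n := by
  intro n
  induction n with
  | zero =>
      intro q
      induction q with
      | zero => simp [Bsur_zero_succ]
      | succ q ih =>
          rw [sum_split, ← ih, Bsur_succ_succ]
          have h : ∑ j ∈ Finset.range q, q.choose j * Bsur (j+1) 0 = 0 :=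
            Finset.sum_eq_zero (fun j _ => by rw [Bsur_succ_zero, mul_zero])
          rw [h]; ring
  | succ m ihm =>
      intro q
      induction q with
      | zero => simp [Bsur_zero_succ]
      | succ q ih =>
          rw [sum_split, ← ih, Bsur_succ_succ]
          have e : ∀ j, q.choose j * Bsur (j+1) (m+1)
              = (m+1)*(q.choose j * Bsur j m) + (m+1)*(q.choose j * Bsur j (m+1)) := by
            intro j; rw [Bsur_succ_succ]; ring
          rw [Finset.sum_congr rfl (fun j _ => e j), Finset.sum_add_distrib,
            ← Finset.mul_sum, ← Finset.mul_sum, ← ihm q, ← ih]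
          ring

lemma binDigitSum_le (m : ℕ) : binDigitSum m ≤ m := Nat.digit_sum_le 2 m

lemma binDigitSum_pos {m : ℕ} (h : m ≠ 0) : 1 ≤ binDigitSum m := by
  rcases Nat.eq_zero_or_pos (binDigitSum m) with h0 | h1
  · exfalso
    apply h
    have hd : Nat.ofDigits 2 (Nat.digits 2 m) = m := Nat.ofDigits_digits 2 m
    have : ∀ l : List ℕ, l.sum = 0 → Nat.ofDigits 2 l = 0 := by
      intro l
      induction l with
      | nil => simp
      | cons a t ih =>
          intro hs
          simp only [List.sum_cons] at hs
          rw [Nat.ofDigits_cons, ih (by omega)]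
          omega
    have := this _ h0
    rw [hd] at this
    exact_mod_cast this
  · exact h1

lemma padicValNat_two_factorial (m : ℕ) :
    padicValNat 2 (Nat.factorial m) = m - binDigitSum m := by
  have h := sub_one_mul_padicValNat_factorial (p := 2) m
  simpa [binDigitSum] using h

lemma padicValNat_two_choose {k q : ℕ} (hk : k ≤ q) :
    padicValNat 2 (q.choose k) + binDigitSum q = binDigitSum k + binDigitSum (q - k) := by
  have hid := Nat.choose_mul_factorial_mul_factorial hk
  have hc0 : q.choose k ≠ 0 := (Nat.choose_pos hk).ne'
  have h1 : padicValNat 2 (q.choose k * Nat.factorial k * Nat.factorial (q - k))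
      = padicValNat 2 (q.choose k) + padicValNat 2 (Nat.factorial k)
        + padicValNat 2 (Nat.factorial (q - k)) := by
    rw [padicValNat.mul (by positivity) (Nat.factorial_ne_zero _),
      padicValNat.mul hc0 (Nat.factorial_ne_zero _)]
  rw [hid] at h1
  rw [padicValNat_two_factorial, padicValNat_two_factorial, padicValNat_two_factorial] at h1
  have b1 := binDigitSum_le k
  have b2 := binDigitSum_le (q - k)
  have b3 := binDigitSum_le q
  omega

lemma pow_two_dvd_iff {a N : ℕ} (hN : N ≠ 0) : 2 ^ a ∣ N ↔ a ≤ padicValNat 2 N := by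
  rw [← Nat.factorization_def N Nat.prime_two,
    Nat.Prime.pow_dvd_iff_le_factorization Nat.prime_two hN]

lemma key_dvd : ∀ n q : ℕ, 2 ^ n ∣ 2 ^ binDigitSum q * Bsur q n := by
  intro n
  induction n with
  | zero => intro q; simp
  | succ n ih =>
      intro q
      rw [Bsur_rec, Finset.mul_sum]
      refine Finset.dvd_sum fun k hk => ?_
      have hkq : k < q := Finset.mem_range.mp hk
      by_cases hB : Bsur k n = 0
      · simp [hB]
      · have hC : q.choose k ≠ 0 := (Nat.choose_pos hkq.le).ne'
        have h2 : (2:ℕ) ^ binDigitSum k ≠ 0 := by positivity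
        have hIH : n ≤ binDigitSum k + padicValNat 2 (Bsur k n) := by
          have h := (pow_two_dvd_iff (Nat.mul_ne_zero h2 hB)).mp (ih k)
          rwa [padicValNat.mul h2 hB, padicValNat.prime_pow] at h
        have hch := padicValNat_two_choose hkq.le
        have hqk : 1 ≤ binDigitSum (q - k) := binDigitSum_pos (by omega)
        rw [pow_two_dvd_iff (by positivity),
          padicValNat.mul (by positivity) (Nat.mul_ne_zero hC hB),
          padicValNat.mul hC hB, padicValNat.prime_pow]
        omega

/-- For `n < q` and an integer `c` with `ν₂(c) ≥ r − q + d(q)` (expressed as the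
divisibility `2^{r + d(q)} ∣ 2^q · c`, which also covers a possibly negative
right-hand side), the 2-adic valuation of `2^{q−n}·n!·S(q,n)·c` is at least `r`,
expressed as `2^r ∣ 2^{q−n}·n!·S(q,n)·c`. -/
theorem stmt_12 (n q r : ℕ) (c : ℤ) (hnq : n < q)
    (hc : (2 : ℤ) ^ (r + binDigitSum q) ∣ 2 ^ q * c) :
    (2 : ℤ) ^ r ∣ 2 ^ (q - n) * Nat.factorial n * stirling q n * c := by
  obtain ⟨m, hm⟩ : (2:ℕ) ^ q ∣ 2 ^ binDigitSum q * (2 ^ (q - n) * Bsur q n) := by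
    have hq : (2:ℕ) ^ q = 2 ^ (q - n) * 2 ^ n := by
      rw [← pow_add]; congr 1; omega
    rw [hq, show (2:ℕ) ^ binDigitSum q * (2 ^ (q - n) * Bsur q n)
        = 2 ^ (q - n) * (2 ^ binDigitSum q * Bsur q n) by ring]
    exact mul_dvd_mul_left _ (key_dvd n q)
  have hmZ : (2:ℤ) ^ binDigitSum q * (2 ^ (q - n) * (Nat.factorial n * stirling q n)) = 2 ^ q * (m:ℤ) := by
    exact_mod_cast congrArg (Nat.cast : ℕ → ℤ) hm
  have hcancel : (2:ℤ) ^ r * 2 ^ binDigitSum q ∣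
      (2 ^ (q - n) * Nat.factorial n * stirling q n * c) * 2 ^ binDigitSum q := by
    have : (2 ^ (q - n) * (Nat.factorial n : ℤ) * stirling q n * c) * 2 ^ binDigitSum q
        = (2 ^ q * (m:ℤ)) * c := by rw [← hmZ]; ring
    rw [this, ← pow_add]
    have h2 : (2:ℤ) ^ q * (m:ℤ) * c = (2 ^ q * c) * m := by ring
    rw [h2]
    exact hc.mul_right m
  exact (mul_dvd_mul_iff_right (pow_ne_zero (binDigitSum q) (two_ne_zero (α := ℤ)))).mp hcancel
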